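/- Let y : ℝ → ℝ be twice differentiable with y''(t) = -y(t) for all t. Then the function I₄(t) = -(1/2)·(y'(t))²·cos(2t) - y(t)·y'(t)·sin(2t) + (1/2)·(y(t))²·cos(2t) is constant, i.e., I₄(t) = I₄(0) for all t ∈ ℝ. -/

import Mathlib

theorem harmonic_first_integral_3 (y y' : ℝ → ℝ)
    (hy : ∀ t, HasDerivAt y (y' t) t)
    (hy' : ∀ t, HasDerivAt y' (-(y t)) t) :
    ∀ t : ℝ, -(1/2) * (y' t)^2 * Real.cos (2*t) - y t * y' t * Real.sin (2*t) + (1/2) * (y t)^2 * Real.cos (2*t) = -(1/2) * (y' 0)^2 * Real.cos (2*0) - y 0 * y' 0 * Real.sin (2*0) + (1/2) * (y 0)^2 * Real.cos (2*0) := by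
  have key : ∀ t : ℝ, HasDerivAt (fun t => -(1/2) * (y' t)^2 * Real.cos (2*t) - y t * y' t * Real.sin (2*t) + (1/2) * (y t)^2 * Real.cos (2*t)) 0 t := by
    intro t
    have hc : HasDerivAt (fun t : ℝ => Real.cos (2*t)) (-Real.sin (2*t) * 2) t := by
      simpa [Function.comp_def] using (Real.hasDerivAt_cos (2*t)).comp t ((hasDerivAt_id t).const_mul 2)
    have hs : HasDerivAt (fun t : ℝ => Real.sin (2*t)) (Real.cos (2*t) * 2) t := by
      simpa [Function.comp_def] using (Real.hasDerivAt_sin (2*t)).comp t ((hasDerivAt_id t).const_mul 2)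
    have h1 := (((hy' t).pow 2).const_mul (-(1/2):ℝ)).mul hc
    have h2 := ((hy t).mul (hy' t)).mul hs
    have h3 := (((hy t).pow 2).const_mul ((1/2):ℝ)).mul hc
    have := (h1.sub h2).add h3
    convert this using 1
    · rfl
    · rfl
    · funext s; simp only [Pi.mul_apply, Pi.sub_apply, Pi.add_apply, Pi.pow_apply]
    · simp only [Pi.mul_apply, Pi.pow_apply]
      ring
  intro t
  have : ∀ s : ℝ, (fun t => -(1/2) * (y' t)^2 * Real.cos (2*t) - y t * y' t * Real.sin (2*t) + (1/2) * (y t)^2 * Real.cos (2*t)) s = (fun t => -(1/2) * (y' t)^2 * Real.cos (2*t) - y t * y' t * Real.sin (2*t) + (1/2) * (y t)^2 * Real.cos (2*t)) 0 := by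
    intro s
    have := is_const_of_deriv_eq_zero (f := fun t => -(1/2) * (y' t)^2 * Real.cos (2*t) - y t * y' t * Real.sin (2*t) + (1/2) * (y t)^2 * Real.cos (2*t))
      (fun x => (key x).differentiableAt) (fun x => (key x).deriv) s 0
    exact this
  exact this t
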